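/- arXiv:2508.11635 — 2 statements merged into one kernel-verified Lean document; each statement's English description precedes it below -/
import Mathlib

section
/- There exists a partial computable function f : ℕ →. ℕ taking only the values 0 and 1 (on its domain) that admits no total computable extension: there is no computable g : ℕ → ℕ such that g(x) = f(x) for every x in the domain of f. -/
open Nat.Partrec (Code)
open Nat.Partrec.Code

theorem exists_unextendible_partial_computable :
    ∃ f : ℕ →. ℕ, Nat.Partrec f ∧
      (∀ x v, v ∈ f x → v = 0 ∨ v = 1) ∧
      ¬∃ g : ℕ → ℕ, Computable g ∧ ∀ x v, v ∈ f x → g x = v := by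
  classical
  let h : ℕ → ℕ := fun m => if m = 0 then 1 else 0
  refine ⟨fun n => (eval ((Denumerable.ofNat Code) n) n).map h, ?_, ?_, ?_⟩
  · refine Partrec.nat_iff.1 ?_
    exact Partrec.map
      (eval_part.comp (Computable.ofNat Code) Computable.id)
      (((Primrec.ite (Primrec.eq.comp Primrec.id (Primrec.const 0))
          (Primrec.const 1) (Primrec.const 0)).to_comp.comp
          Computable.snd).to₂)
  · intro x v hv
    rcases (Part.mem_map_iff h).1 hv with ⟨m, _, rfl⟩
    by_cases hm : m = 0 <;> simp [h, hm]
  · rintro ⟨g, hg, hext⟩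
    have : Nat.Partrec (fun n => Part.some (g n)) := Partrec.nat_iff.1 hg
    rcases exists_code.1 this with ⟨c, hc⟩
    set n := Encodable.encode c with hn
    have hcn : (Denumerable.ofNat Code) n = c := by
      simp [hn]
    have hmem : h (g n) ∈ (eval ((Denumerable.ofNat Code) n) n).map h := by
      rw [hcn, hc]
      exact Part.mem_map h (Part.mem_some _)
    have := hext n _ hmem
    by_cases h0 : g n = 0 <;> simp [h, h0] at this
end

section
/- There exist two disjoint computably enumerable subsets A, B of ℕ that are computably inseparable: there is no computable function h : ℕ → ℕ such that h(x) = 0 for all x ∈ A and h(x) = 1 for all x ∈ B. -/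
open Nat.Partrec (Code)
open Nat.Partrec.Code

private def diagEval : ℕ →. ℕ := fun x => (Denumerable.ofNat Code x).eval x

private lemma diagEval_partrec : Partrec diagEval :=
  eval_part.comp (Computable.ofNat Code) Computable.id

private def fA : ℕ →. ℕ :=
  fun x => (diagEval x).bind fun y => if y = 0 then Part.none else Part.some 0

private def fB : ℕ →. ℕ :=
  fun x => (diagEval x).bind fun y => if y = 0 then Part.some 0 else Part.none

private lemma inner_comp : Computable fun p : ℕ × ℕ => decide (p.2 = 0) :=
  (PrimrecPred.decide (Primrec.eq.comp Primrec.snd (Primrec.const 0))).to_comp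

private lemma fA_partrec : Partrec fA := by
  have := diagEval_partrec.bind
    ((Partrec.cond inner_comp Partrec.none (Partrec.some.comp (Computable.const 0))).to₂)
  refine this.of_eq fun x => ?_
  simp only [fA]
  congr 1; funext y
  by_cases h : y = 0 <;> simp [h]

private lemma fB_partrec : Partrec fB := by
  have := diagEval_partrec.bind
    ((Partrec.cond inner_comp (Partrec.some.comp (Computable.const 0)) Partrec.none).to₂)
  refine this.of_eq fun x => ?_
  simp only [fB]
  congr 1; funext y
  by_cases h : y = 0 <;> simp [h]

theorem exists_computably_inseparable_ce_sets :
    ∃ A B : Set ℕ,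
      (∃ f : ℕ →. ℕ, Nat.Partrec f ∧ A = {x | (f x).Dom}) ∧
      (∃ f : ℕ →. ℕ, Nat.Partrec f ∧ B = {x | (f x).Dom}) ∧
      Disjoint A B ∧
      ¬∃ h : ℕ → ℕ, Computable h ∧ (∀ x ∈ A, h x = 0) ∧ (∀ x ∈ B, h x = 1) := by
  refine ⟨{x | (fA x).Dom}, {x | (fB x).Dom},
    ⟨fA, Partrec.nat_iff.1 fA_partrec, rfl⟩,
    ⟨fB, Partrec.nat_iff.1 fB_partrec, rfl⟩, ?_, ?_⟩
  · rw [Set.disjoint_left]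
    rintro x hA hB
    simp only [Set.mem_setOf_eq, fA, fB, Part.bind_dom] at hA hB
    obtain ⟨hd, ha⟩ := hA
    obtain ⟨hd', hb⟩ := hB
    have : (diagEval x).get hd = (diagEval x).get hd' := by congr
    by_cases h : (diagEval x).get hd = 0
    · rw [h] at ha; simp at ha
    · rw [← this, if_neg h] at hb; simp at hb
  · rintro ⟨h, hc, h0, h1⟩
    have hp : Partrec (fun n => Part.some (h n) : ℕ →. ℕ) := Partrec.some.comp hc
    obtain ⟨c, hc'⟩ := exists_code.1 (Partrec.nat_iff.1 hp)
    set e := Encodable.encode c with he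
    have hde : diagEval e = Part.some (h e) := by
      simp [diagEval, he, hc']
    by_cases hz : h e = 0
    · have hb : (fB e).Dom := by
        simp [fB, hde, hz]
      have := h1 e hb
      omega
    · have ha : (fA e).Dom := by
        simp [fA, hde, hz]
      have := h0 e ha
      omega
end
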